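/- If J₁ = J₂ = J₄ = {0}, then B = [A,A] is spanned by the following elements: all x^{α,i} with (α₂,α₄) ≠ (0,0); all x^{β,i} with (β₂,β₄) = (0,0) and β₁ ≠ 1; and all elements γ₃ x^{γ+δ,i} + i₃ x^{γ+δ,i−1_[3]} + 2 x^{γ,i} with (γ₂,γ₄) = (0,0) and γ₁ = 1 (here i ranges over J in each case). -/

import Mathlib

namespace SuBlock

variable (F : Type*) [Field F]

def sigmaV : Fin 4 → F := ![1, 0, 1, 0]

def deltaV (d : F) : Fin 4 → F := ![0, 0, d, 0]

/-- The data `(Γ, J, δ)` of the paper: `δ₃ ∈ F \ {0}`, `Γ ≤ F⁴` an additive subgroup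
containing `σ = (1,0,1,0)` and `δ = (0,0,δ₃,0)`, with `ker π₄ ⊄ ker π₂` whenever `π₂ ≠ 0`,
and `J_p` encoded by `m p : Bool` (`J_p = ℕ` iff `m p = true`), with `J_q ≠ {0}`
whenever `π_q = 0`, for `q = 2,4`.  (Coordinates `1,2,3,4` are `Fin 4` indices `0,1,2,3`.) -/
structure Datum where
  d3 : F
  d3_ne : d3 ≠ 0
  Γ : AddSubgroup (Fin 4 → F)
  m : Fin 4 → Bool
  sigma_mem : sigmaV F ∈ Γ
  delta_mem : deltaV F d3 ∈ Γ
  ker_cond : (∃ α ∈ Γ, α 1 ≠ 0) → ∃ α ∈ Γ, α 3 = 0 ∧ α 1 ≠ 0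
  J2_cond : (∀ α ∈ Γ, α 1 = 0) → m 1 = true
  J4_cond : (∀ α ∈ Γ, α 3 = 0) → m 3 = true

variable {F}

/-- The monoid `J = J₁ × J₂ × J₃ × J₄ ⊆ ℕ⁴`, where `J_p = ℕ` if `m p = true` and
`J_p = {0}` otherwise. -/
def Jmon (m : Fin 4 → Bool) : AddSubmonoid (Fin 4 → ℕ) where
  carrier := {i | ∀ p, m p = false → i p = 0}
  zero_mem' := fun p _ => rfl
  add_mem' := fun ha hb p hp => by
    simp only [Set.mem_setOf_eq] at ha hb
    simp [Pi.add_apply, ha p hp, hb p hp]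

/-- The commutative associative algebra `A = A(Γ,J)`, the semigroup algebra of `Γ × J`
with basis `x^{α,i}`, `(α,i) ∈ Γ × J`. -/
abbrev Alg (D : Datum F) : Type _ := AddMonoidAlgebra F (↥D.Γ × ↥(Jmon D.m))

/-- The basis element `x^{α,i}`. -/
noncomputable def X (D : Datum F) (g : ↥D.Γ × ↥(Jmon D.m)) : Alg D :=
  AddMonoidAlgebra.single g 1

/-- `i - 1_[p]` (truncated subtraction). -/
def subE {m : Fin 4 → Bool} (i : ↥(Jmon m)) (p : Fin 4) : ↥(Jmon m) :=
  ⟨i.1 - Pi.single p 1, fun q hq => by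
    have h : i.1 q = 0 := i.2 q hq
    simp only [Pi.sub_apply, h, Nat.zero_sub]⟩

/-- `∂_p x^{α,i} = α_p x^{α,i} + i_p x^{α,i-1_[p]}` (coordinates are `Fin 4` indexed). -/
noncomputable def Dmon (D : Datum F) (p : Fin 4) (g : ↥D.Γ × ↥(Jmon D.m)) : Alg D :=
  (g.1.1 p) • X D g + ((g.2.1 p : F)) • X D (g.1, subE g.2 p)

/-- The derivation `∂_p` of `A`, extended linearly from its values on the basis. -/
noncomputable def Dop (D : Datum F) (p : Fin 4) (u : Alg D) : Alg D :=
  Finsupp.sum u.coeff fun g c => c • Dmon D p g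

/-- The Lie bracket (1.6):
`[u,v] = x^{σ,0}(∂₁(u)∂₂(v) − ∂₁(v)∂₂(u)) + (x^{δ,0}∂₃(u) + u)∂₄(v) − ∂₄(u)(x^{δ,0}∂₃(v) + v)`. -/
noncomputable def br (D : Datum F) (u v : Alg D) : Alg D :=
  X D (⟨sigmaV F, D.sigma_mem⟩, 0) * (Dop D 0 u * Dop D 1 v - Dop D 0 v * Dop D 1 u)
    + (X D (⟨deltaV F D.d3, D.delta_mem⟩, 0) * Dop D 2 u + u) * Dop D 3 v
    - Dop D 3 u * (X D (⟨deltaV F D.d3, D.delta_mem⟩, 0) * Dop D 2 v + v)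

/-- The derived subalgebra `B = [A,A]`, the span of all brackets. -/
noncomputable def Bspan (D : Datum F) : Submodule F (Alg D) :=
  Submodule.span F {w | ∃ u v : Alg D, w = br D u v}


variable {D : Datum F}

lemma X_mul (g h : ↥D.Γ × ↥(Jmon D.m)) : X D g * X D h = X D (g + h) := by
  simp [X, AddMonoidAlgebra.single_mul_single]

lemma smulX_mul (a b : F) (g h : ↥D.Γ × ↥(Jmon D.m)) :
    (a • X D g) * (b • X D h) = (a * b) • X D (g + h) := by
  rw [smul_mul_smul_comm, X_mul]

lemma Dop_single (p : Fin 4) (g : ↥D.Γ × ↥(Jmon D.m)) :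
    Dop D p (X D g) = Dmon D p g := by
  rw [Dop, X, AddMonoidAlgebra.coeff_single, Finsupp.sum_single_index (by simp), one_smul]

lemma Dop_zero (p : Fin 4) : Dop D p (0 : Alg D) = 0 := by
  simp [Dop]

lemma Dop_add (p : Fin 4) (u v : Alg D) :
    Dop D p (u + v) = Dop D p u + Dop D p v := by
  rw [Dop, Dop, Dop, AddMonoidAlgebra.coeff_add]; exact
  Finsupp.sum_add_index' (fun _ => zero_smul F _) (fun _ b c => add_smul b c _)

lemma Dop_smul (p : Fin 4) (c : F) (u : Alg D) :
    Dop D p (c • u) = c • Dop D p u := by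
  rw [Dop, Dop, AddMonoidAlgebra.coeff_smul, Finsupp.smul_sum,
    Finsupp.sum_smul_index' (h0 := fun i => zero_smul F (Dmon D p i))]
  simp [smul_smul]

lemma br_zero_left (v : Alg D) : br D 0 v = 0 := by
  simp [br, Dop_zero]

lemma br_zero_right (u : Alg D) : br D u 0 = 0 := by
  simp [br, Dop_zero]

lemma br_add_left (u u' v : Alg D) : br D (u + u') v = br D u v + br D u' v := by
  simp only [br, Dop_add]; ring

lemma br_add_right (u v v' : Alg D) : br D u (v + v') = br D u v + br D u v' := by
  simp only [br, Dop_add]; ring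

lemma br_smul_left (c : F) (u v : Alg D) : br D (c • u) v = c • br D u v := by
  simp only [br, Dop_smul]; simp only [Algebra.smul_def]; ring

lemma br_smul_right (c : F) (u v : Alg D) : br D u (c • v) = c • br D u v := by
  simp only [br, Dop_smul]; simp only [Algebra.smul_def]; ring

lemma Dmon_false {p : Fin 4} (hp : D.m p = false) (g : ↥D.Γ × ↥(Jmon D.m)) :
    Dmon D p g = g.1.1 p • X D g := by
  simp [Dmon, g.2.2 p hp]

lemma br_XX (h1 : D.m 0 = false) (h2 : D.m 1 = false) (h4 : D.m 3 = false)
    (μ ν : D.Γ) (k l : ↥(Jmon D.m)) :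
    br D (X D (μ, k)) (X D (ν, l)) =
      (μ.1 0 * ν.1 1 - ν.1 0 * μ.1 1) • X D ((⟨sigmaV F, D.sigma_mem⟩, 0) + (μ, k) + (ν, l))
      + (ν.1 3 * μ.1 2 - μ.1 3 * ν.1 2) • X D ((⟨deltaV F D.d3, D.delta_mem⟩, 0) + (μ, k) + (ν, l))
      + (ν.1 3 * (k.1 2 : F)) • X D ((⟨deltaV F D.d3, D.delta_mem⟩, 0) + (μ, subE k 2) + (ν, l))
      - (μ.1 3 * (l.1 2 : F)) • X D ((⟨deltaV F D.d3, D.delta_mem⟩, 0) + (μ, k) + (ν, subE l 2))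
      + (ν.1 3 - μ.1 3) • X D ((μ, k) + (ν, l)) := by
  rw [br]
  simp only [Dop_single, Dmon_false h1, Dmon_false h2, Dmon_false h4]
  simp only [Dmon]
  simp only [mul_add, add_mul, mul_sub, sub_mul, smul_mul_assoc, mul_smul_comm, X_mul,
    smul_smul, smul_add, smul_sub]
  have eσ2 : (((⟨sigmaV F, D.sigma_mem⟩, 0) : ↥D.Γ × ↥(Jmon D.m)) + ((ν, l) + (μ, k)))
      = (⟨sigmaV F, D.sigma_mem⟩, 0) + (μ, k) + (ν, l) := by abel
  have eσ1 : (((⟨sigmaV F, D.sigma_mem⟩, 0) : ↥D.Γ × ↥(Jmon D.m)) + ((μ, k) + (ν, l)))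
      = (⟨sigmaV F, D.sigma_mem⟩, 0) + (μ, k) + (ν, l) := by abel
  have eδ1 : ((μ, k) + (((⟨deltaV F D.d3, D.delta_mem⟩, 0) : ↥D.Γ × ↥(Jmon D.m)) + (ν, l)))
      = (⟨deltaV F D.d3, D.delta_mem⟩, 0) + (μ, k) + (ν, l) := by abel
  have eδ2 : ((μ, k) + (((⟨deltaV F D.d3, D.delta_mem⟩, 0) : ↥D.Γ × ↥(Jmon D.m)) + (ν, subE l 2)))
      = (⟨deltaV F D.d3, D.delta_mem⟩, 0) + (μ, k) + (ν, subE l 2) := by abel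
  rw [eσ1, eσ2, eδ1, eδ2]
  module

/-- The generating set of (2.5). -/
def Sgen (D : Datum F) : Set (Alg D) :=
  ({w | ∃ (α : D.Γ) (i : ↥(Jmon D.m)),
      ((α.1 1, α.1 3) : F × F) ≠ (0, 0) ∧ w = X D (α, i)} ∪
   {w | ∃ (β : D.Γ) (i : ↥(Jmon D.m)),
      β.1 1 = 0 ∧ β.1 3 = 0 ∧ β.1 0 ≠ 1 ∧ w = X D (β, i)} ∪
   {w | ∃ (γ : D.Γ) (i : ↥(Jmon D.m)),
      γ.1 1 = 0 ∧ γ.1 3 = 0 ∧ γ.1 0 = 1 ∧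
      w = (γ.1 2) • X D (⟨γ.1 + deltaV F D.d3, D.Γ.add_mem γ.2 D.delta_mem⟩, i)
        + ((i.1 2 : F)) • X D (⟨γ.1 + deltaV F D.d3, D.Γ.add_mem γ.2 D.delta_mem⟩, subE i 2)
        + (2 : F) • X D (γ, i)})

lemma memA (α : D.Γ) (i : ↥(Jmon D.m)) (h : ((α.1 1, α.1 3) : F × F) ≠ (0, 0)) :
    X D (α, i) ∈ Submodule.span F (Sgen D) :=
  Submodule.subset_span (Or.inl (Or.inl ⟨α, i, h, rfl⟩))

lemma memB (β : D.Γ) (i : ↥(Jmon D.m)) (hb2 : β.1 1 = 0) (hb4 : β.1 3 = 0)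
    (hb1 : β.1 0 ≠ 1) : X D (β, i) ∈ Submodule.span F (Sgen D) :=
  Submodule.subset_span (Or.inl (Or.inr ⟨β, i, hb2, hb4, hb1, rfl⟩))

lemma memC (γ : D.Γ) (i : ↥(Jmon D.m)) (hb2 : γ.1 1 = 0) (hb4 : γ.1 3 = 0)
    (hb1 : γ.1 0 = 1) :
    (γ.1 2) • X D (⟨γ.1 + deltaV F D.d3, D.Γ.add_mem γ.2 D.delta_mem⟩, i)
      + ((i.1 2 : F)) • X D (⟨γ.1 + deltaV F D.d3, D.Γ.add_mem γ.2 D.delta_mem⟩, subE i 2)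
      + (2 : F) • X D (γ, i) ∈ Submodule.span F (Sgen D) :=
  Submodule.subset_span (Or.inr ⟨γ, i, hb2, hb4, hb1, rfl⟩)

lemma subE_add_left (k l : ↥(Jmon D.m)) (hk : k.1 2 ≠ 0) :
    subE k 2 + l = subE (k + l) 2 := by
  apply Subtype.ext
  show (k.1 - Pi.single 2 1) + l.1 = (k.1 + l.1) - Pi.single 2 1
  funext q
  simp only [Pi.sub_apply, Pi.add_apply]
  have hq : (Pi.single (2 : Fin 4) (1 : ℕ) : Fin 4 → ℕ) q ≤ k.1 q := by
    by_cases h : q = 2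
    · subst h; simpa using Nat.one_le_iff_ne_zero.mpr hk
    · simp [Pi.single_apply, h]
  omega

lemma subE_add_right (k l : ↥(Jmon D.m)) (hl : l.1 2 ≠ 0) :
    k + subE l 2 = subE (k + l) 2 := by
  rw [add_comm k, add_comm k, subE_add_left l k hl]

lemma subE_combine (a a' : ↥D.Γ) (ha : a = a') (k l : ↥(Jmon D.m)) :
    (k.1 2 : F) • X D (a, subE k 2 + l) + (l.1 2 : F) • X D (a, k + subE l 2)
      = ((k.1 2 : F) + (l.1 2 : F)) • X D (a', subE (k + l) 2) := by
  subst ha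
  rcases Nat.eq_zero_or_pos (k.1 2) with hk | hk
  · rcases Nat.eq_zero_or_pos (l.1 2) with hl | hl
    · simp [hk, hl]
    · rw [subE_add_right k l (Nat.pos_iff_ne_zero.mp hl), hk]
      simp
  · rcases Nat.eq_zero_or_pos (l.1 2) with hl | hl
    · rw [subE_add_left k l (Nat.pos_iff_ne_zero.mp hk), hl]
      simp
    · rw [subE_add_left k l (Nat.pos_iff_ne_zero.mp hk),
        subE_add_right k l (Nat.pos_iff_ne_zero.mp hl), ← add_smul]

lemma br_XX_deg (h1 : D.m 0 = false) (h2 : D.m 1 = false) (h4 : D.m 3 = false)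
    (μ ν : D.Γ) (k l : ↥(Jmon D.m))
    (hb2 : μ.1 1 + ν.1 1 = 0) (hb4 : μ.1 3 + ν.1 3 = 0) :
    br D (X D (μ, k)) (X D (ν, l)) =
      (-((μ.1 0 + ν.1 0) * μ.1 1)) • X D ((⟨sigmaV F, D.sigma_mem⟩, 0) + (μ, k) + (ν, l))
      + (-(μ.1 3)) • (((μ + ν).1 2) •
            X D (⟨(μ + ν).1 + deltaV F D.d3, D.Γ.add_mem (μ + ν).2 D.delta_mem⟩, k + l)
          + (((k + l).1 2 : F)) •
            X D (⟨(μ + ν).1 + deltaV F D.d3, D.Γ.add_mem (μ + ν).2 D.delta_mem⟩, subE (k + l) 2)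
          + (2 : F) • X D (μ + ν, k + l)) := by
  have hν1 : ν.1 1 = -(μ.1 1) := by linear_combination hb2
  have hν3 : ν.1 3 = -(μ.1 3) := by linear_combination hb4
  rw [br_XX h1 h2 h4]
  have p1 : (((⟨deltaV F D.d3, D.delta_mem⟩, 0) : ↥D.Γ × ↥(Jmon D.m)) + (μ, k) + (ν, l))
      = ((⟨(μ + ν).1 + deltaV F D.d3, D.Γ.add_mem (μ + ν).2 D.delta_mem⟩ : D.Γ), k + l) := by
    refine Prod.ext (Subtype.ext ?_) ?_
    · show deltaV F D.d3 + μ.1 + ν.1 = (μ.1 + ν.1) + deltaV F D.d3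
      abel
    · show (0 : ↥(Jmon D.m)) + k + l = k + l
      rw [zero_add]
  have p2 : (((⟨deltaV F D.d3, D.delta_mem⟩, 0) : ↥D.Γ × ↥(Jmon D.m)) + (μ, subE k 2) + (ν, l))
      = ((⟨(μ + ν).1 + deltaV F D.d3, D.Γ.add_mem (μ + ν).2 D.delta_mem⟩ : D.Γ), subE k 2 + l) := by
    refine Prod.ext (Subtype.ext ?_) ?_
    · show deltaV F D.d3 + μ.1 + ν.1 = (μ.1 + ν.1) + deltaV F D.d3
      abel
    · show (0 : ↥(Jmon D.m)) + subE k 2 + l = subE k 2 + l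
      rw [zero_add]
  have p3 : (((⟨deltaV F D.d3, D.delta_mem⟩, 0) : ↥D.Γ × ↥(Jmon D.m)) + (μ, k) + (ν, subE l 2))
      = ((⟨(μ + ν).1 + deltaV F D.d3, D.Γ.add_mem (μ + ν).2 D.delta_mem⟩ : D.Γ), k + subE l 2) := by
    refine Prod.ext (Subtype.ext ?_) ?_
    · show deltaV F D.d3 + μ.1 + ν.1 = (μ.1 + ν.1) + deltaV F D.d3
      abel
    · show (0 : ↥(Jmon D.m)) + k + subE l 2 = k + subE l 2
      rw [zero_add]
  have p4 : (((μ, k) : ↥D.Γ × ↥(Jmon D.m)) + (ν, l)) = (μ + ν, k + l) := rfl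
  rw [p1, p2, p3, p4, hν1, hν3]
  have hcomb := subE_combine
    (⟨(μ + ν).1 + deltaV F D.d3, D.Γ.add_mem (μ + ν).2 D.delta_mem⟩ : D.Γ)
    (⟨(μ + ν).1 + deltaV F D.d3, D.Γ.add_mem (μ + ν).2 D.delta_mem⟩ : D.Γ) rfl k l
  have hγ2 : (μ + ν).1 2 = μ.1 2 + ν.1 2 := rfl
  have hkl : ((k + l).1 2 : F) = (k.1 2 : F) + (l.1 2 : F) := by
    have : (k + l).1 2 = k.1 2 + l.1 2 := rfl
    rw [this, Nat.cast_add]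
  rw [hγ2, hkl]
  linear_combination (norm := module) (-(μ.1 3 : F)) • hcomb

lemma coord_add (a b : D.Γ) (p : Fin 4) : (a + b).1 p = a.1 p + b.1 p := rfl

lemma sig0 : sigmaV F 0 = 1 := rfl
lemma sig1 : sigmaV F 1 = 0 := rfl
lemma sig3 : sigmaV F 3 = 0 := rfl
lemma del0 (d : F) : deltaV F d 0 = 0 := rfl
lemma del1 (d : F) : deltaV F d 1 = 0 := rfl
lemma del3 (d : F) : deltaV F d 3 = 0 := rfl

lemma key_mem (h1 : D.m 0 = false) (h2 : D.m 1 = false) (h4 : D.m 3 = false)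
    (μ ν : D.Γ) (k l : ↥(Jmon D.m)) :
    br D (X D (μ, k)) (X D (ν, l)) ∈ Submodule.span F (Sgen D) := by
  by_cases hb : μ.1 1 + ν.1 1 = 0 ∧ μ.1 3 + ν.1 3 = 0
  · obtain ⟨hb2, hb4⟩ := hb
    rw [br_XX_deg h1 h2 h4 μ ν k l hb2 hb4]
    apply add_mem
    · by_cases h00 : μ.1 0 + ν.1 0 = 0
      · rw [show -((μ.1 0 + ν.1 0) * μ.1 1) = 0 by rw [h00]; ring, zero_smul]
        exact zero_mem _
      · refine Submodule.smul_mem _ _ (memB _ _ ?_ ?_ ?_)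
        · show sigmaV F 1 + μ.1 1 + ν.1 1 = 0
          rw [sig1]; linear_combination hb2
        · show sigmaV F 3 + μ.1 3 + ν.1 3 = 0
          rw [sig3]; linear_combination hb4
        · show sigmaV F 0 + μ.1 0 + ν.1 0 ≠ 1
          rw [sig0]
          intro hcon
          exact h00 (by linear_combination hcon)
    · by_cases hb0 : μ.1 0 + ν.1 0 = 1
      · exact Submodule.smul_mem _ _ (memC (μ + ν) (k + l)
          (by rw [coord_add]; exact hb2) (by rw [coord_add]; exact hb4)
          (by rw [coord_add]; exact hb0))
      · refine Submodule.smul_mem _ _ (add_mem (add_mem ?_ ?_) ?_)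
        · refine Submodule.smul_mem _ _ (memB _ _ ?_ ?_ ?_)
          · show μ.1 1 + ν.1 1 + deltaV F D.d3 1 = 0
            rw [del1]; linear_combination hb2
          · show μ.1 3 + ν.1 3 + deltaV F D.d3 3 = 0
            rw [del3]; linear_combination hb4
          · show μ.1 0 + ν.1 0 + deltaV F D.d3 0 ≠ 1
            rw [del0]
            intro hcon
            exact hb0 (by linear_combination hcon)
        · refine Submodule.smul_mem _ _ (memB _ _ ?_ ?_ ?_)
          · show μ.1 1 + ν.1 1 + deltaV F D.d3 1 = 0
            rw [del1]; linear_combination hb2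
          · show μ.1 3 + ν.1 3 + deltaV F D.d3 3 = 0
            rw [del3]; linear_combination hb4
          · show μ.1 0 + ν.1 0 + deltaV F D.d3 0 ≠ 1
            rw [del0]
            intro hcon
            exact hb0 (by linear_combination hcon)
        · refine Submodule.smul_mem _ _ (memB _ _ ?_ ?_ ?_)
          · rw [coord_add]; exact hb2
          · rw [coord_add]; exact hb4
          · rw [coord_add]; exact hb0
  · have hne : ∀ a : D.Γ, a.1 1 = μ.1 1 + ν.1 1 → a.1 3 = μ.1 3 + ν.1 3 →
        ∀ i : ↥(Jmon D.m), X D (a, i) ∈ Submodule.span F (Sgen D) := by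
      intro a ha1 ha3 i
      refine memA a i ?_
      rw [Ne, Prod.mk.injEq, ha1, ha3, not_and_or]
      rcases not_and_or.mp hb with h | h
      exacts [Or.inl h, Or.inr h]
    rw [br_XX h1 h2 h4]
    refine add_mem (sub_mem (add_mem (add_mem ?_ ?_) ?_) ?_) ?_ <;>
      refine Submodule.smul_mem _ _ (hne _ ?_ ?_ _)
    · show sigmaV F 1 + μ.1 1 + ν.1 1 = _
      rw [sig1, zero_add]
    · show sigmaV F 3 + μ.1 3 + ν.1 3 = _
      rw [sig3, zero_add]
    · show deltaV F D.d3 1 + μ.1 1 + ν.1 1 = _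
      rw [del1, zero_add]
    · show deltaV F D.d3 3 + μ.1 3 + ν.1 3 = _
      rw [del3, zero_add]
    · show deltaV F D.d3 1 + μ.1 1 + ν.1 1 = _
      rw [del1, zero_add]
    · show deltaV F D.d3 3 + μ.1 3 + ν.1 3 = _
      rw [del3, zero_add]
    · show deltaV F D.d3 1 + μ.1 1 + ν.1 1 = _
      rw [del1, zero_add]
    · show deltaV F D.d3 3 + μ.1 3 + ν.1 3 = _
      rw [del3, zero_add]
    · exact rfl
    · exact rfl

lemma single_eq_smul_X (a : ↥D.Γ × ↥(Jmon D.m)) (b : F) :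
    (AddMonoidAlgebra.single a b : Alg D) = b • X D a := by
  rw [X, AddMonoidAlgebra.smul_single, smul_eq_mul, mul_one]

lemma br_mem (h1 : D.m 0 = false) (h2 : D.m 1 = false) (h4 : D.m 3 = false)
    (u v : Alg D) : br D u v ∈ Submodule.span F (Sgen D) := by
  induction u using AddMonoidAlgebra.induction_linear with
  | zero => rw [br_zero_left]; exact zero_mem _
  | add f g hf hg => rw [br_add_left]; exact add_mem hf hg
  | single a b =>
    induction v using AddMonoidAlgebra.induction_linear with
    | zero => rw [br_zero_right]; exact zero_mem _
    | add f g hf hg => rw [br_add_right]; exact add_mem hf hg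
    | single c d =>
      obtain ⟨μ, k⟩ := a
      obtain ⟨ν, l⟩ := c
      rw [single_eq_smul_X, single_eq_smul_X, br_smul_left, br_smul_right]
      exact Submodule.smul_mem _ _ (Submodule.smul_mem _ _ (key_mem h1 h2 h4 μ ν k l))

lemma exists_tau (h4 : D.m 3 = false) : ∃ τ : D.Γ, τ.1 3 ≠ 0 := by
  by_contra h
  push_neg at h
  have := D.J4_cond (fun α hα => h ⟨α, hα⟩)
  rw [this] at h4
  exact Bool.noConfusion h4

lemma exists_rho (h2 : D.m 1 = false) : ∃ ρ : D.Γ, ρ.1 3 = 0 ∧ ρ.1 1 ≠ 0 := by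
  have hex : ∃ α ∈ D.Γ, α 1 ≠ 0 := by
    by_contra h
    push_neg at h
    have := D.J2_cond h
    rw [this] at h2
    exact Bool.noConfusion h2
  obtain ⟨α, hαΓ, h3, h1ne⟩ := D.ker_cond hex
  exact ⟨⟨α, hαΓ⟩, h3, h1ne⟩

lemma br_mem_Bspan (u v : Alg D) : br D u v ∈ Bspan D :=
  Submodule.subset_span ⟨u, v, rfl⟩

lemma X_mem_Bspan_b (h1 : D.m 0 = false) (h2 : D.m 1 = false) (h4 : D.m 3 = false)
    (β : D.Γ) (i : ↥(Jmon D.m)) (hb2 : β.1 1 = 0) (hb4 : β.1 3 = 0) (hb0 : β.1 0 ≠ 1) :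
    X D (β, i) ∈ Bspan D := by
  obtain ⟨ρ, hρ3, hρ1⟩ := exists_rho h2
  set σ' : D.Γ := ⟨sigmaV F, D.sigma_mem⟩ with hσ'
  set ν : D.Γ := β - σ' - ρ with hνdef
  have hbr := br_XX h1 h2 h4 ρ ν 0 i
  have hν1 : ν.1 1 = -(ρ.1 1) := by
    show β.1 1 - sigmaV F 1 - ρ.1 1 = -(ρ.1 1)
    rw [sig1, hb2]; ring
  have hν3 : ν.1 3 = 0 := by
    show β.1 3 - sigmaV F 3 - ρ.1 3 = 0
    rw [sig3, hb4, hρ3]; ring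
  have hν0 : ν.1 0 = β.1 0 - 1 - ρ.1 0 := by
    show β.1 0 - sigmaV F 0 - ρ.1 0 = _
    rw [sig0]
  have hpt : ((σ', (0 : ↥(Jmon D.m))) + (ρ, 0) + (ν, i)) = (β, i) := by
    refine Prod.ext (Subtype.ext ?_) ?_
    · show sigmaV F + ρ.1 + (β.1 - sigmaV F - ρ.1) = β.1
      abel
    · show (0 : ↥(Jmon D.m)) + 0 + i = i
      simp
  rw [hpt, hν3, hρ3] at hbr
  simp only [zero_mul, mul_zero, zero_smul, add_zero, sub_zero, sub_self, zero_sub,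
    neg_zero, Nat.cast_zero] at hbr
  have hc : ρ.1 0 * ν.1 1 - ν.1 0 * ρ.1 1 ≠ 0 := by
    rw [hν1, hν0]
    intro hcon
    have h0 : (1 - β.1 0) * ρ.1 1 = 0 := by linear_combination hcon
    rcases mul_eq_zero.mp h0 with h | h
    · exact hb0 (by linear_combination -h)
    · exact hρ1 h
  have hX : X D (β, i) = (ρ.1 0 * ν.1 1 - ν.1 0 * ρ.1 1)⁻¹ •
      br D (X D (ρ, 0)) (X D (ν, i)) := by
    rw [hbr, smul_smul, inv_mul_cancel₀ hc, one_smul]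
  rw [hX]
  exact Submodule.smul_mem _ _ (br_mem_Bspan _ _)

lemma X_mem_Bspan_a (h1 : D.m 0 = false) (h2 : D.m 1 = false) (h4 : D.m 3 = false)
    (α : D.Γ) (i : ↥(Jmon D.m)) (ha : α.1 1 ≠ 0 ∨ α.1 3 ≠ 0) :
    X D (α, i) ∈ Bspan D := by
  by_cases hα3 : α.1 3 = 0
  · have hα1 : α.1 1 ≠ 0 := by tauto
    set σ' : D.Γ := ⟨sigmaV F, D.sigma_mem⟩ with hσ'
    set ν : D.Γ := α - σ' - σ' with hνdef
    have hbr := br_XX h1 h2 h4 σ' ν 0 i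
    have hν1 : ν.1 1 = α.1 1 := by
      show α.1 1 - sigmaV F 1 - sigmaV F 1 = α.1 1
      rw [sig1]; ring
    have hν3 : ν.1 3 = 0 := by
      show α.1 3 - sigmaV F 3 - sigmaV F 3 = 0
      rw [sig3, hα3]; ring
    have hσ3 : σ'.1 3 = 0 := sig3
    have hσ1 : σ'.1 1 = 0 := sig1
    have hσ0 : σ'.1 0 = 1 := sig0
    have hpt : ((σ', (0 : ↥(Jmon D.m))) + (σ', 0) + (ν, i)) = (α, i) := by
      refine Prod.ext (Subtype.ext ?_) ?_
      · show sigmaV F + sigmaV F + (α.1 - sigmaV F - sigmaV F) = α.1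
        abel
      · show (0 : ↥(Jmon D.m)) + 0 + i = i
        simp
    rw [hpt, hν3, hσ3, hσ1, hσ0, hν1] at hbr
    simp only [zero_mul, mul_zero, one_mul, zero_smul, add_zero, sub_zero, sub_self,
      zero_sub, neg_zero, Nat.cast_zero] at hbr
    have hX : X D (α, i) = (α.1 1)⁻¹ • br D (X D (σ', 0)) (X D (ν, i)) := by
      rw [hbr, smul_smul, inv_mul_cancel₀ hα1, one_smul]
    rw [hX]
    exact Submodule.smul_mem _ _ (br_mem_Bspan _ _)
  · have hbr := br_XX h1 h2 h4 0 α 0 i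
    have h0p : ∀ p : Fin 4, ((0 : D.Γ)).1 p = 0 := fun p => rfl
    have h0j : (((0 : ↥(Jmon D.m))).1 2 : F) = 0 := by norm_num
    have hpt : (((0 : D.Γ), (0 : ↥(Jmon D.m))) + (α, i)) = (α, i) := by
      refine Prod.ext (Subtype.ext ?_) ?_ <;> simp
    rw [hpt, h0p 0, h0p 1, h0p 2, h0p 3, h0j] at hbr
    simp only [zero_mul, mul_zero, zero_smul, add_zero, sub_zero, zero_add, zero_sub,
      neg_zero, zero_smul, Nat.cast_zero] at hbr
    have hX : X D (α, i) = (α.1 3)⁻¹ • br D (X D (0, 0)) (X D (α, i)) := by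
      rw [hbr, smul_smul, inv_mul_cancel₀ hα3, one_smul]
    rw [hX]
    exact Submodule.smul_mem _ _ (br_mem_Bspan _ _)

lemma E_mem_Bspan (h1 : D.m 0 = false) (h2 : D.m 1 = false) (h4 : D.m 3 = false)
    (γ : D.Γ) (i : ↥(Jmon D.m)) (hg2 : γ.1 1 = 0) (hg4 : γ.1 3 = 0) (hg0 : γ.1 0 = 1) :
    (γ.1 2) • X D (⟨γ.1 + deltaV F D.d3, D.Γ.add_mem γ.2 D.delta_mem⟩, i)
      + ((i.1 2 : F)) • X D (⟨γ.1 + deltaV F D.d3, D.Γ.add_mem γ.2 D.delta_mem⟩, subE i 2)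
      + (2 : F) • X D (γ, i) ∈ Bspan D := by
  obtain ⟨τ, hτ3⟩ := exists_tau h4
  have hb2 : τ.1 1 + (γ - τ).1 1 = 0 := by
    show τ.1 1 + (γ.1 1 - τ.1 1) = 0
    rw [hg2]; ring
  have hb4 : τ.1 3 + (γ - τ).1 3 = 0 := by
    show τ.1 3 + (γ.1 3 - τ.1 3) = 0
    rw [hg4]; ring
  have hbr := br_XX_deg h1 h2 h4 τ (γ - τ) 0 i hb2 hb4
  have hγeq : τ + (γ - τ) = γ := by abel
  rw [hγeq] at hbr
  rw [zero_add] at hbr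
  have hpt : (((⟨sigmaV F, D.sigma_mem⟩, 0) : ↥D.Γ × ↥(Jmon D.m)) + (τ, 0) + (γ - τ, i))
      = ((⟨sigmaV F, D.sigma_mem⟩ : D.Γ) + γ, i) := by
    refine Prod.ext (Subtype.ext ?_) ?_
    · show sigmaV F + τ.1 + (γ.1 - τ.1) = sigmaV F + γ.1
      abel
    · show (0 : ↥(Jmon D.m)) + 0 + i = i
      simp
  rw [hpt] at hbr
  have hXσγ : X D ((⟨sigmaV F, D.sigma_mem⟩ : D.Γ) + γ, i) ∈ Bspan D := by
    refine X_mem_Bspan_b h1 h2 h4 _ i ?_ ?_ ?_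
    · show sigmaV F 1 + γ.1 1 = 0
      rw [sig1, hg2]; ring
    · show sigmaV F 3 + γ.1 3 = 0
      rw [sig3, hg4]; ring
    · show sigmaV F 0 + γ.1 0 ≠ 1
      rw [sig0, hg0]
      intro hcon
      exact one_ne_zero (by linear_combination hcon)
  have hE : (γ.1 2) • X D (⟨γ.1 + deltaV F D.d3, D.Γ.add_mem γ.2 D.delta_mem⟩, i)
      + ((i.1 2 : F)) • X D (⟨γ.1 + deltaV F D.d3, D.Γ.add_mem γ.2 D.delta_mem⟩, subE i 2)
      + (2 : F) • X D (γ, i)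
      = (-(τ.1 3))⁻¹ • (br D (X D (τ, 0)) (X D (γ - τ, i))
          - (-((τ.1 0 + (γ - τ).1 0) * τ.1 1)) •
            X D ((⟨sigmaV F, D.sigma_mem⟩ : D.Γ) + γ, i)) := by
    rw [hbr]
    have hτ3' : -(τ.1 3) ≠ 0 := neg_ne_zero.mpr hτ3
    match_scalars <;> field_simp <;> ring
  rw [hE]
  exact Submodule.smul_mem _ _ (sub_mem (br_mem_Bspan _ _) (Submodule.smul_mem _ _ hXσγ))

lemma span_eq_aux (h1 : D.m 0 = false) (h2 : D.m 1 = false) (h4 : D.m 3 = false) :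
    Bspan D = Submodule.span F (Sgen D) := by
  apply le_antisymm
  · rw [Bspan, Submodule.span_le]
    rintro w ⟨u, v, rfl⟩
    exact br_mem h1 h2 h4 u v
  · rw [Submodule.span_le]
    intro w hw
    simp only [Sgen, Set.mem_union, Set.mem_setOf_eq] at hw
    rcases hw with (⟨α, i, hne, rfl⟩ | ⟨β, i, hbb2, hbb4, hbb0, rfl⟩) | ⟨γ, i, hg2, hg4, hg0, rfl⟩
    · exact X_mem_Bspan_a h1 h2 h4 α i (by rwa [Ne, Prod.mk.injEq, not_and_or] at hne)
    · exact X_mem_Bspan_b h1 h2 h4 β i hbb2 hbb4 hbb0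
    · exact E_mem_Bspan h1 h2 h4 γ i hg2 hg4 hg0

/-- if `J₁ = J₂ = J₄ = {0}`, then `B = [A,A]` is spanned by the elements (2.5). -/
theorem derived_subalgebra_span (F : Type*) [Field F] [CharZero F] (D : Datum F)
    (h1 : D.m 0 = false) (h2 : D.m 1 = false) (h4 : D.m 3 = false) :
    Bspan D = Submodule.span F
      ({w | ∃ (α : D.Γ) (i : ↥(Jmon D.m)),
          ((α.1 1, α.1 3) : F × F) ≠ (0, 0) ∧ w = X D (α, i)} ∪
       {w | ∃ (β : D.Γ) (i : ↥(Jmon D.m)),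
          β.1 1 = 0 ∧ β.1 3 = 0 ∧ β.1 0 ≠ 1 ∧ w = X D (β, i)} ∪
       {w | ∃ (γ : D.Γ) (i : ↥(Jmon D.m)),
          γ.1 1 = 0 ∧ γ.1 3 = 0 ∧ γ.1 0 = 1 ∧
          w = (γ.1 2) • X D (⟨γ.1 + deltaV F D.d3, D.Γ.add_mem γ.2 D.delta_mem⟩, i)
            + ((i.1 2 : F)) • X D (⟨γ.1 + deltaV F D.d3, D.Γ.add_mem γ.2 D.delta_mem⟩, subE i 2)
            + (2 : F) • X D (γ, i)}) := by
  exact span_eq_aux h1 h2 h4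

end SuBlock
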